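/- If ψ₁ : X₁ → U₁ and ψ₂ : X₂ → U₂ are functions with X₁ ⊆ ℝⁿ, U₁ ⊆ ℝᵐ, X₂ ⊆ ℝᵐ, U₂ ⊆ ℝᵒ, X₂ ⊇ U₁, and both ψ₁ and ψ₂ are MILP representable, then the composition ψ₂ ∘ ψ₁ : X₁ → U₂ is MILP representable. -/

import Mathlib

open Fin

/-- Selection matrix: row `j'` picks coordinate `p j'`. -/
def selMat {r N : ℕ} (p : Fin r → Fin N) : Matrix (Fin r) (Fin N) ℝ :=
  Matrix.of fun j' j => if p j' = j then 1 else 0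

lemma selMat_mulVec {r N : ℕ} (p : Fin r → Fin N) (w : Fin N → ℝ) :
    (selMat p).mulVec w = w ∘ p := by
  funext j'
  simp [selMat, Matrix.mulVec, dotProduct, ite_mul]

lemma mulVec_appendRows {k₁ k₂ N : ℕ} (A : Matrix (Fin k₁) (Fin N) ℝ)
    (B : Matrix (Fin k₂) (Fin N) ℝ) (w : Fin N → ℝ) :
    (Matrix.of (Fin.append A B)).mulVec w = Fin.append (A.mulVec w) (B.mulVec w) := by
  funext i
  refine Fin.addCases (fun i => ?_) (fun i => ?_) i <;>
    simp [Matrix.mulVec, Fin.append_left, Fin.append_right]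
  exacts [congrArg (· ⬝ᵥ w) (Fin.append_left A B i), congrArg (· ⬝ᵥ w) (Fin.append_right A B i)]

lemma append_le_append_iff {k₁ k₂ : ℕ} (a d₁ : Fin k₁ → ℝ) (b d₂ : Fin k₂ → ℝ) :
    Fin.append a b ≤ Fin.append d₁ d₂ ↔ a ≤ d₁ ∧ b ≤ d₂ := by
  constructor
  · intro h
    exact ⟨fun i => by simpa using h (Fin.castAdd _ i),
           fun i => by simpa using h (Fin.natAdd _ i)⟩
  · rintro ⟨h1, h2⟩ i
    refine Fin.addCases (fun i => ?_) (fun i => ?_) i <;>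
      simp [Fin.append_left, Fin.append_right]
    exacts [h1 i, h2 i]

lemma eq_append3 {a b c : ℕ} (z : Fin (a + b + c) → ℝ) :
    z = Fin.append (Fin.append (fun i => z (castAdd c (castAdd b i)))
      (fun i => z (castAdd c (natAdd a i)))) (fun i => z (natAdd (a + b) i)) := by
  funext j
  refine Fin.addCases (fun j => ?_) (fun j => ?_) j
  · refine Fin.addCases (fun j => ?_) (fun j => ?_) j <;>
      simp [Fin.append_left, Fin.append_right]
  · simp [Fin.append_right]

lemma eq_append2 {a b : ℕ} (z : Fin (a + b) → ℝ) :
    z = Fin.append (fun i => z (castAdd b i)) (fun i => z (natAdd a i)) := by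
  funext j
  refine Fin.addCases (fun j => ?_) (fun j => ?_) j <;>
    simp [Fin.append_left, Fin.append_right]

/-- Index map extracting `(x, y, z₁, β₁)` from `(x, u, (y,z₁,z₂), (β₁,β₂))`. -/
def compP1 (n m o c₁ c₂ b₁ b₂ : ℕ) :
    Fin (n + m + c₁ + b₁) → Fin (n + o + (m + c₁ + c₂) + (b₁ + b₂)) :=
  Fin.append (Fin.append (Fin.append
    (fun i => castAdd (b₁ + b₂) (castAdd (m + c₁ + c₂) (castAdd o i)))
    (fun i => castAdd (b₁ + b₂) (natAdd (n + o) (castAdd c₂ (castAdd c₁ i)))))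
    (fun i => castAdd (b₁ + b₂) (natAdd (n + o) (castAdd c₂ (natAdd m i)))))
    (fun i => natAdd (n + o + (m + c₁ + c₂)) (castAdd b₂ i))

/-- Index map extracting `(y, u, z₂, β₂)` from `(x, u, (y,z₁,z₂), (β₁,β₂))`. -/
def compP2 (n m o c₁ c₂ b₁ b₂ : ℕ) :
    Fin (m + o + c₂ + b₂) → Fin (n + o + (m + c₁ + c₂) + (b₁ + b₂)) :=
  Fin.append (Fin.append (Fin.append
    (fun i => castAdd (b₁ + b₂) (natAdd (n + o) (castAdd c₂ (castAdd c₁ i))))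
    (fun i => castAdd (b₁ + b₂) (castAdd (m + c₁ + c₂) (natAdd n i))))
    (fun i => castAdd (b₁ + b₂) (natAdd (n + o) (natAdd (m + c₁) i))))
    (fun i => natAdd (n + o + (m + c₁ + c₂)) (natAdd b₁ i))

lemma comp_compP1 {n m o c₁ c₂ b₁ b₂ : ℕ} (x : Fin n → ℝ) (u : Fin o → ℝ)
    (y : Fin m → ℝ) (z₁ : Fin c₁ → ℝ) (z₂ : Fin c₂ → ℝ)
    (β₁ : Fin b₁ → ℝ) (β₂ : Fin b₂ → ℝ) :
    (Fin.append (Fin.append (Fin.append x u) (Fin.append (Fin.append y z₁) z₂))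
      (Fin.append β₁ β₂)) ∘ compP1 n m o c₁ c₂ b₁ b₂
    = Fin.append (Fin.append (Fin.append x y) z₁) β₁ := by
  funext j
  simp only [Function.comp_apply, compP1]
  refine Fin.addCases (fun j => ?_) (fun j => ?_) j
  · refine Fin.addCases (fun j => ?_) (fun j => ?_) j
    · refine Fin.addCases (fun j => ?_) (fun j => ?_) j <;>
        simp [Fin.append_left, Fin.append_right]
    · simp [Fin.append_left, Fin.append_right]
  · simp [Fin.append_left, Fin.append_right]

lemma comp_compP2 {n m o c₁ c₂ b₁ b₂ : ℕ} (x : Fin n → ℝ) (u : Fin o → ℝ)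
    (y : Fin m → ℝ) (z₁ : Fin c₁ → ℝ) (z₂ : Fin c₂ → ℝ)
    (β₁ : Fin b₁ → ℝ) (β₂ : Fin b₂ → ℝ) :
    (Fin.append (Fin.append (Fin.append x u) (Fin.append (Fin.append y z₁) z₂))
      (Fin.append β₁ β₂)) ∘ compP2 n m o c₁ c₂ b₁ b₂
    = Fin.append (Fin.append (Fin.append y u) z₂) β₂ := by
  funext j
  simp only [Function.comp_apply, compP2]
  refine Fin.addCases (fun j => ?_) (fun j => ?_) j
  · refine Fin.addCases (fun j => ?_) (fun j => ?_) j
    · refine Fin.addCases (fun j => ?_) (fun j => ?_) j <;>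
        simp [Fin.append_left, Fin.append_right]
    · simp [Fin.append_left, Fin.append_right]
  · simp [Fin.append_left, Fin.append_right]



/-- A function `ψ` defined on a domain `X ⊆ ℝⁿ` with values in `ℝᵐ` is MILP representable
if there are nonnegative integers `c`, `b` and a polyhedron `P = {w : M w ≤ d}` in
`ℝ^(n+m+c+b)` such that for all `x ∈ X` and `u`, `u = ψ x` iff there exist `z ∈ ℝᶜ` and
binary `β ∈ {0,1}ᵇ` with `(x, u, z, β) ∈ P`. -/
def MILPRepresentable {n m : ℕ} (X : Set (Fin n → ℝ))
    (ψ : (Fin n → ℝ) → (Fin m → ℝ)) : Prop :=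
  ∃ (c b k : ℕ) (M : Matrix (Fin k) (Fin (n + m + c + b)) ℝ) (d : Fin k → ℝ),
    ∀ x ∈ X, ∀ u : Fin m → ℝ,
      u = ψ x ↔ ∃ (z : Fin c → ℝ) (β : Fin b → ℝ),
        (∀ j, β j = 0 ∨ β j = 1) ∧
        M.mulVec (Fin.append (Fin.append (Fin.append x u) z) β) ≤ d

/-- Composition of MILP representable functions is MILP representable. -/
theorem composition_MILP_representable {n m o : ℕ}
    (X₁ : Set (Fin n → ℝ)) (X₂ : Set (Fin m → ℝ))
    (ψ₁ : (Fin n → ℝ) → (Fin m → ℝ)) (ψ₂ : (Fin m → ℝ) → (Fin o → ℝ))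
    (hrange : ψ₁ '' X₁ ⊆ X₂)
    (h₁ : MILPRepresentable X₁ ψ₁) (h₂ : MILPRepresentable X₂ ψ₂) :
    MILPRepresentable X₁ (ψ₂ ∘ ψ₁) := by
  obtain ⟨c₁, b₁, k₁, M₁, d₁, H₁⟩ := h₁
  obtain ⟨c₂, b₂, k₂, M₂, d₂, H₂⟩ := h₂
  refine ⟨m + c₁ + c₂, b₁ + b₂, k₁ + k₂,
    Matrix.of (Fin.append (M₁ * selMat (compP1 n m o c₁ c₂ b₁ b₂))
                          (M₂ * selMat (compP2 n m o c₁ c₂ b₁ b₂))),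
    Fin.append d₁ d₂, ?_⟩
  intro x hx u
  constructor
  · intro hu
    have hyX : ψ₁ x ∈ X₂ := hrange ⟨x, hx, rfl⟩
    obtain ⟨z₁, β₁, hb₁, hM₁⟩ := (H₁ x hx (ψ₁ x)).mp rfl
    obtain ⟨z₂, β₂, hb₂, hM₂⟩ := (H₂ (ψ₁ x) hyX u).mp hu
    refine ⟨Fin.append (Fin.append (ψ₁ x) z₁) z₂, Fin.append β₁ β₂, ?_, ?_⟩
    · intro j
      refine Fin.addCases (fun j => ?_) (fun j => ?_) j <;>
        simp only [Fin.append_left, Fin.append_right]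
      exacts [hb₁ j, hb₂ j]
    · rw [mulVec_appendRows, append_le_append_iff]
      constructor
      · rw [← Matrix.mulVec_mulVec, selMat_mulVec, comp_compP1]
        exact hM₁
      · rw [← Matrix.mulVec_mulVec, selMat_mulVec, comp_compP2]
        exact hM₂
  · rintro ⟨z, β, hb, hM⟩
    have hz := eq_append3 z
    have hβ := eq_append2 β
    rw [hz, hβ, mulVec_appendRows, append_le_append_iff] at hM
    obtain ⟨hM1, hM2⟩ := hM
    rw [← Matrix.mulVec_mulVec, selMat_mulVec, comp_compP1] at hM1
    rw [← Matrix.mulVec_mulVec, selMat_mulVec, comp_compP2] at hM2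
    have hy : (fun i => z (castAdd c₂ (castAdd c₁ i))) = ψ₁ x :=
      (H₁ x hx _).mpr ⟨_, _, fun j => hb _, hM1⟩
    have hyX : (fun i => z (castAdd c₂ (castAdd c₁ i))) ∈ X₂ :=
      hrange ⟨x, hx, hy.symm⟩
    have hu : u = ψ₂ (fun i => z (castAdd c₂ (castAdd c₁ i))) :=
      (H₂ _ hyX u).mpr ⟨_, _, fun j => hb _, hM2⟩
    rw [hu, hy]
    rfl
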